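/- arXiv:1511.07526 — 6 statements merged into one kernel-verified Lean document; each statement's English description precedes it below -/
import Mathlib

section
/- Let A be an m×m real matrix and suppose there exist β̂ > 0 and λ̂ > 0 such that ‖exp(−t·A)‖ ≤ β̂·e^{−λ̂·t} for all t ≥ 0. Let 0 < λ < λ̂, Γ ≥ 0, let ξ : ℝ → ℝ^m be continuous with ‖ξ(s)‖ ≤ Γ·e^{−λ·s} for all s ≥ 0, and let η : ℝ → ℝ^m be differentiable with η′(t) = −A·η(t) + ξ(t) for all t ≥ 0. Then η(t) → 0 as t → ∞. -/
open NormedSpace Filter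

set_option maxHeartbeats 1600000
set_option synthInstance.maxHeartbeats 800000

/-- If `‖exp(-t·A)‖ ≤ β̂·e^{-λ̂ t}` (operator norm induced by the Euclidean norm),
`0 < λ < λ̂`, `‖ξ(s)‖ ≤ Γ·e^{-λ s}` for `s ≥ 0` with `ξ` continuous, and
`η′(t) = -A·η(t) + ξ(t)` for `t ≥ 0`, then `η(t) → 0` as `t → ∞`. -/
theorem perturbed_linear_system_tendsto_zero
    (m : ℕ) (A : Matrix (Fin m) (Fin m) ℝ)
    (βhat lhat lam Γ : ℝ)
    (hβhat : 0 < βhat) (hlhat : 0 < lhat)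
    (hexp : ∀ t : ℝ, 0 ≤ t →
      ‖Matrix.toEuclideanCLM (𝕜 := ℝ) (NormedSpace.exp ((-t) • A))‖
        ≤ βhat * Real.exp (-lhat * t))
    (hlam : 0 < lam) (hlamlt : lam < lhat) (hΓ : 0 ≤ Γ)
    (ξ η : ℝ → EuclideanSpace ℝ (Fin m))
    (hξc : Continuous ξ)
    (hξ : ∀ s : ℝ, 0 ≤ s → ‖ξ s‖ ≤ Γ * Real.exp (-lam * s))
    (hη : ∀ t : ℝ, 0 ≤ t →
      HasDerivAt η (-(Matrix.toEuclideanLin A (η t)) + ξ t) t) :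
    Filter.Tendsto η Filter.atTop (nhds 0) := by
  set L : EuclideanSpace ℝ (Fin m) →L[ℝ] EuclideanSpace ℝ (Fin m) :=
    Matrix.toEuclideanCLM (𝕜 := ℝ) A with hLdef
  have hmap : ∀ t : ℝ, Matrix.toEuclideanCLM (𝕜 := ℝ) (exp (t • A)) = exp (t • L) := by
    intro t
    letI : SeminormedRing (Matrix (Fin m) (Fin m) ℝ) := Matrix.linftyOpSemiNormedRing
    letI : NormedRing (Matrix (Fin m) (Fin m) ℝ) := Matrix.linftyOpNormedRing
    letI : NormedAlgebra ℝ (Matrix (Fin m) (Fin m) ℝ) := Matrix.linftyOpNormedAlgebra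
    have hc : Continuous (Matrix.toEuclideanCLM (𝕜 := ℝ) (n := Fin m)) := by
      let f : Matrix (Fin m) (Fin m) ℝ →ₗ[ℝ]
          (EuclideanSpace ℝ (Fin m) →L[ℝ] EuclideanSpace ℝ (Fin m)) :=
        { toFun := Matrix.toEuclideanCLM (𝕜 := ℝ), map_add' := map_add _,
          map_smul' := map_smul _ }
      exact f.continuous_of_finiteDimensional
    rw [hLdef, show t • Matrix.toEuclideanCLM (𝕜 := ℝ) A = Matrix.toEuclideanCLM (𝕜 := ℝ) (t • A)
      from (map_smul _ t A).symm, ← map_exp_of_mem_ball (𝕂 := ℝ) _ hc (t • A)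
        ((expSeries_radius_eq_top ℝ (Matrix (Fin m) (Fin m) ℝ)).symm ▸ edist_lt_top _ _)]
    rfl
  have hB : ∀ t : ℝ, 0 ≤ t → ‖exp ((-t) • L)‖ ≤ βhat * Real.exp (-lhat * t) := by
    intro t ht; rw [← hmap]; exact hexp t ht
  have hGcont : Continuous fun s : ℝ => exp (s • L) :=
    continuous_iff_continuousAt.2 fun s => (hasDerivAt_exp_smul_const L s).continuousAt
  have hgrp : ∀ a b : ℝ, exp (a • L) * exp (b • L) = exp ((a + b) • L) := by
    intro a b
    have h : (a + b) • L = a • L + b • L := add_smul a b L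
    have hcomm : Commute (a • L) (b • L) := by
      apply ContinuousLinearMap.ext
      intro v
      simp [ContinuousLinearMap.mul_apply, smul_smul, mul_comm]
    rw [h, exp_add_of_commute_of_mem_ball (𝕂 := ℝ) hcomm
      ((expSeries_radius_eq_top ℝ (EuclideanSpace ℝ (Fin m) →L[ℝ] EuclideanSpace ℝ (Fin m))).symm ▸
        edist_lt_top _ _)
      ((expSeries_radius_eq_top ℝ (EuclideanSpace ℝ (Fin m) →L[ℝ] EuclideanSpace ℝ (Fin m))).symm ▸
        edist_lt_top _ _)]
  have h0L : ((0 : ℝ)) • L = 0 := zero_smul ℝ L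
  set φ : ℝ → EuclideanSpace ℝ (Fin m) := fun t => exp (t • L) (η t) with hφdef
  have hφ0 : φ 0 = η 0 := by
    show exp ((0 : ℝ) • L) (η 0) = η 0
    rw [h0L, exp_zero, ContinuousLinearMap.one_apply]
  have hφ' : ∀ t : ℝ, 0 ≤ t → HasDerivAt φ (exp (t • L) (ξ t)) t := by
    intro t ht
    have h1 := (hasDerivAt_exp_smul_const L t).clm_apply (hη t ht)
    convert h1 using 1
    · rfl
    · rfl
    · rfl
    have hLapp : Matrix.toEuclideanLin A (η t) = L (η t) := rfl
    rw [hLapp, map_add, map_neg, ContinuousLinearMap.mul_apply]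
    abel
  have key : ∀ t : ℝ, 0 ≤ t →
      η t = exp ((-t) • L) (φ 0 + ∫ s in (0:ℝ)..t, exp (s • L) (ξ s)) := by
    intro t ht
    have hint : (∫ s in (0:ℝ)..t, exp (s • L) (ξ s)) = φ t - φ 0 := by
      apply intervalIntegral.integral_eq_sub_of_hasDerivAt
      · intro s hs
        rw [Set.uIcc_of_le ht] at hs
        exact hφ' s hs.1
      · exact (hGcont.clm_apply hξc).intervalIntegrable 0 t
    rw [hint, add_sub_cancel]
    show η t = exp ((-t) • L) (exp (t • L) (η t))
    rw [← ContinuousLinearMap.mul_apply, hgrp, neg_add_cancel, h0L, exp_zero,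
      ContinuousLinearMap.one_apply]
  have hbound : ∀ t : ℝ, 0 ≤ t →
      ‖η t‖ ≤ βhat * Real.exp (-lhat * t) * ‖η 0‖
        + βhat * Γ * Real.exp (-lam * t) * t := by
    intro t ht
    rw [key t ht, (exp ((-t) • L)).map_add]
    refine (norm_add_le _ _).trans (add_le_add ?_ ?_)
    · calc ‖exp ((-t) • L) (φ 0)‖ ≤ ‖exp ((-t) • L)‖ * ‖φ 0‖ :=
            ContinuousLinearMap.le_opNorm _ _
        _ ≤ (βhat * Real.exp (-lhat * t)) * ‖η 0‖ := by
            rw [hφ0]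
            exact mul_le_mul_of_nonneg_right (hB t ht) (norm_nonneg _)
  -- second term
    · rw [← ContinuousLinearMap.intervalIntegral_comp_comm _
        ((hGcont.clm_apply hξc).intervalIntegrable 0 t)]
      have hC : ∀ s ∈ Set.uIoc (0:ℝ) t,
          ‖exp ((-t) • L) (exp (s • L) (ξ s))‖ ≤ βhat * Γ * Real.exp (-lam * t) := by
        intro s hs
        rw [Set.uIoc_of_le ht] at hs
        obtain ⟨hs0, hst⟩ := hs
        have hs0' : 0 ≤ s := hs0.le
        calc ‖exp ((-t) • L) (exp (s • L) (ξ s))‖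
            = ‖exp ((-(t - s)) • L) (ξ s)‖ := by
              rw [← ContinuousLinearMap.mul_apply, hgrp]
              have : -t + s = -(t - s) := by ring
              rw [this]
          _ ≤ ‖exp ((-(t - s)) • L)‖ * ‖ξ s‖ := ContinuousLinearMap.le_opNorm _ _
          _ ≤ (βhat * Real.exp (-lhat * (t - s))) * (Γ * Real.exp (-lam * s)) := by
              apply mul_le_mul (hB _ (by linarith)) (hξ s hs0') (norm_nonneg _)
              positivity
          _ = βhat * Γ * Real.exp (-lhat * (t - s) + -lam * s) := by
              rw [Real.exp_add]; ring
          _ ≤ βhat * Γ * Real.exp (-lam * t) := by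
              apply mul_le_mul_of_nonneg_left _ (by positivity)
              apply Real.exp_le_exp.2
              nlinarith
      calc ‖∫ s in (0:ℝ)..t, exp ((-t) • L) (exp (s • L) (ξ s))‖
          ≤ βhat * Γ * Real.exp (-lam * t) * |t - 0| :=
            intervalIntegral.norm_integral_le_of_norm_le_const hC
        _ = βhat * Γ * Real.exp (-lam * t) * t := by
            rw [sub_zero, abs_of_nonneg ht]
  have h1 : Tendsto (fun t : ℝ => βhat * Real.exp (-lhat * t) * ‖η 0‖) atTop (nhds 0) := by
    have he : Tendsto (fun t : ℝ => Real.exp (-lhat * t)) atTop (nhds 0) := by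
      have h := Real.tendsto_exp_neg_atTop_nhds_zero.comp
        ((tendsto_const_mul_atTop_of_pos hlhat).2 tendsto_id)
      exact h.congr fun t => by simp [Function.comp, neg_mul]
    simpa using (he.const_mul βhat).mul_const ‖η 0‖
  have h2 : Tendsto (fun t : ℝ => βhat * Γ * Real.exp (-lam * t) * t) atTop (nhds 0) := by
    have hc := (Real.tendsto_pow_mul_exp_neg_atTop_nhds_zero 1).comp
      ((tendsto_const_mul_atTop_of_pos hlam).2 tendsto_id)
    have he : Tendsto (fun t : ℝ => (lam * t) * Real.exp (-(lam * t))) atTop (nhds 0) :=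
      hc.congr fun t => by simp [Function.comp]
    have h3 := he.const_mul (βhat * Γ / lam)
    rw [mul_zero] at h3
    refine h3.congr fun t => ?_
    rw [neg_mul]
    field_simp
  have hsum : Tendsto (fun t : ℝ => βhat * Real.exp (-lhat * t) * ‖η 0‖
      + βhat * Γ * Real.exp (-lam * t) * t) atTop (nhds 0) := by
    simpa using h1.add h2
  exact squeeze_zero_norm' (eventually_atTop.2 ⟨0, fun t ht => hbound t ht⟩) hsum
end

section
/- Let N ≥ 2 and let L be an N×N real matrix with zero row sums, i.e., L·1_N = 0. Write L in block form L = [[c, bᵀ],[a, M]] with c ∈ ℝ, b, a ∈ ℝ^{N−1}, and M an (N−1)×(N−1) matrix. Then the characteristic polynomial of L equals X times the characteristic polynomial of M − 1_{N−1}·bᵀ. In particular, the eigenvalues of M − 1_{N−1}·bᵀ are exactly the eigenvalues of L with one zero eigenvalue removed (counted with multiplicity). -/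
open Matrix Polynomial

lemma charpoly_conj_aux {n R : Type*} [Fintype n] [DecidableEq n] [CommRing R]
    (P Q A : Matrix n n R) (h1 : P * Q = 1) (h2 : Q * P = 1) :
    (P * A * Q).charpoly = A.charpoly := by
  have key : charmatrix (P * A * Q) = P.map C * charmatrix A * Q.map C := by
    unfold charmatrix
    simp only [Matrix.mul_sub, Matrix.sub_mul, RingHom.mapMatrix_apply]
    congr 1
    · rw [← (Matrix.scalar_commute (X : R[X]) (Commute.all X) (P.map C)).eq, Matrix.mul_assoc,
        ← Matrix.map_mul, h1, Matrix.map_one _ (map_zero _) (map_one _), Matrix.mul_one]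
    · rw [← Matrix.map_mul, ← Matrix.map_mul]
  rw [Matrix.charpoly, Matrix.charpoly, key, det_mul, det_mul, mul_comm, ← mul_assoc, ← det_mul,
    ← Matrix.map_mul, h2, Matrix.map_one _ (map_zero _) (map_one _), det_one, one_mul]

/-- For an `N×N` matrix `L` with zero row sums, written in block form
`L = [[c, bᵀ],[a, M]]`, the characteristic polynomial of `L` equals `X` times the
characteristic polynomial of `M - 1·bᵀ`, where `1·bᵀ` is the rank-one matrix whose
`(i,j)` entry is `b j`. -/
theorem laplacian_charpoly_factor
    (k : ℕ) (hk : 1 ≤ k)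
    (L : Matrix (Fin 1 ⊕ Fin k) (Fin 1 ⊕ Fin k) ℝ)
    (hrow : L.mulVec (fun _ => (1:ℝ)) = 0)
    (c : Matrix (Fin 1) (Fin 1) ℝ) (b : Matrix (Fin 1) (Fin k) ℝ)
    (a : Matrix (Fin k) (Fin 1) ℝ) (M : Matrix (Fin k) (Fin k) ℝ)
    (hL : L = Matrix.fromBlocks c b a M) :
    Matrix.charpoly L
      = Polynomial.X * Matrix.charpoly (M - (Matrix.of fun _ _ => (1:ℝ)) * b) := by
  set w : Matrix (Fin k) (Fin 1) ℝ := Matrix.of fun _ _ => (1:ℝ) with hw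
  set P : Matrix (Fin 1 ⊕ Fin k) (Fin 1 ⊕ Fin k) ℝ := Matrix.fromBlocks 1 0 w 1 with hP
  set Q : Matrix (Fin 1 ⊕ Fin k) (Fin 1 ⊕ Fin k) ℝ := Matrix.fromBlocks 1 0 (-w) 1 with hQ
  have h1 : Q * P = 1 := by
    rw [hP, hQ, Matrix.fromBlocks_multiply]
    simp [← Matrix.fromBlocks_one]
  have h2 : P * Q = 1 := by
    rw [hP, hQ, Matrix.fromBlocks_multiply]
    simp [← Matrix.fromBlocks_one]
  -- row sum facts
  have hcb : c + b * w = 0 := by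
    ext i j
    have := congrFun hrow (Sum.inl i)
    simp [hL, Matrix.mulVec, Matrix.fromBlocks, dotProduct, Fintype.sum_sum_type] at this
    fin_cases i; fin_cases j
    simpa [hw, Matrix.mul_apply, Fin.sum_univ_succ] using this
  have haM : a + M * w = 0 := by
    ext i j
    have := congrFun hrow (Sum.inr i)
    simp [hL, Matrix.mulVec, Matrix.fromBlocks, dotProduct, Fintype.sum_sum_type] at this
    fin_cases j
    simpa [hw, Matrix.mul_apply] using this
  have hb : b * w = -c := by rw [← neg_eq_of_add_eq_zero_left hcb]; abel
  have hm : M * w = -a := by rw [← neg_eq_of_add_eq_zero_left haM]; abel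
  have key : Q * L * P = Matrix.fromBlocks 0 b 0 (M - w * b) := by
    rw [hL, hP, hQ, Matrix.fromBlocks_multiply, Matrix.fromBlocks_multiply]
    simp only [Matrix.mul_one, Matrix.one_mul, Matrix.mul_zero, Matrix.zero_mul,
      add_zero, zero_add, Matrix.add_mul, Matrix.mul_add, Matrix.mul_assoc,
      Matrix.neg_mul, Matrix.mul_neg, hb, hm]
    abel
  have := charpoly_conj_aux Q P L h1 h2
  rw [key] at this
  rw [← this, Matrix.charpoly_fromBlocks_zero₂₁]
  congr 1
  · rw [Matrix.charpoly, Matrix.det_fin_one]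
    simp [charmatrix_apply_eq]
end

section
/- Let x : ℝ → ℝⁿ, let β > 0, λ > 0, let ρ ≥ 1 be an integer, let 0 ≤ τ ≤ δ̄, and let s₀ < s₁ < … < s_ρ be real numbers such that s_μ − s₀ ≥ μ·τ for μ = 1,…,ρ and s_ρ − s₀ ≤ ρ·δ̄. Suppose that for each μ = 0,…,ρ−1 and every t ∈ [s_μ, s_{μ+1}], ‖x(s_μ) − x(t)‖ ≤ β·e^{−λ·t}. Then for every t ∈ [s₀, s_ρ], ‖x(s₀) − x(t)‖ ≤ γ_l·e^{−λ·t}, where γ_l = β·e^{ρ·λ·δ̄}·∑_{μ=1}^{ρ} e^{−μ·λ·τ} (bound on the state error seen by a neighbor under up to ρ−1 consecutive packet dropouts). -/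
/-- Bound on the state error seen by a neighbor under up to `ρ-1` consecutive packet
dropouts: if events at times `s₀ < s₁ < … < s_ρ` satisfy `s_μ - s₀ ≥ μτ` and
`s_ρ - s₀ ≤ ρδ̄`, and between consecutive events the local error satisfies the
threshold `‖x(s_μ) - x(t)‖ ≤ β e^{-λ t}`, then for every `t ∈ [s₀, s_ρ]` we have
`‖x(s₀) - x(t)‖ ≤ γ_l e^{-λ t}` with `γ_l = β e^{ρλδ̄} ∑_{μ=1}^{ρ} e^{-μλτ}`. -/
theorem dropout_error_bound
    (n : ℕ) (x : ℝ → EuclideanSpace ℝ (Fin n))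
    (β lam : ℝ) (hβ : 0 < β) (hlam : 0 < lam)
    (ρ : ℕ) (hρ : 1 ≤ ρ)
    (τ δbar : ℝ) (hτ : 0 ≤ τ) (hτδ : τ ≤ δbar)
    (s : ℕ → ℝ)
    (hmono : ∀ μ : ℕ, μ < ρ → s μ < s (μ + 1))
    (hlow : ∀ μ : ℕ, 1 ≤ μ → μ ≤ ρ → (μ : ℝ) * τ ≤ s μ - s 0)
    (hup : s ρ - s 0 ≤ (ρ : ℝ) * δbar)
    (hthr : ∀ μ : ℕ, μ < ρ → ∀ t ∈ Set.Icc (s μ) (s (μ + 1)),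
      ‖x (s μ) - x t‖ ≤ β * Real.exp (-lam * t)) :
    ∀ t ∈ Set.Icc (s 0) (s ρ),
      ‖x (s 0) - x t‖
        ≤ (β * Real.exp ((ρ : ℝ) * lam * δbar)
            * ∑ μ ∈ Finset.Icc 1 ρ, Real.exp (-(μ : ℝ) * lam * τ))
          * Real.exp (-lam * t) := by
  have smono : ∀ a b : ℕ, a ≤ b → b ≤ ρ → s a ≤ s b := by
    intro a b hab hbρ
    induction b with
    | zero => simp [Nat.le_zero.mp hab]
    | succ m ih =>
      rcases Nat.lt_or_ge a (m + 1) with h | h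
      · have h1 : s a ≤ s m := ih (Nat.lt_succ_iff.mp h) (le_trans (Nat.le_succ m) hbρ)
        exact le_trans h1 (le_of_lt (hmono m (Nat.lt_of_succ_le hbρ)))
      · have : a = m + 1 := le_antisymm hab h
        simp [this]
  have key : ∀ k, k ≤ ρ → ∀ u ∈ Set.Icc (s 0) (s k),
      ‖x (s 0) - x u‖ ≤ β * ∑ j ∈ Finset.Ico 1 k, Real.exp (-lam * s j)
        + β * Real.exp (-lam * u) := by
    intro k
    induction k with
    | zero =>
      intro _ u hu
      have hu0 : u = s 0 := le_antisymm hu.2 hu.1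
      subst hu0
      simp
      positivity
    | succ m ih =>
      intro hk u hu
      have hmρ : m < ρ := hk
      have hmρ' : m ≤ ρ := le_of_lt hmρ
      rcases le_or_gt u (s m) with h | h
      · have h1 := ih hmρ' u ⟨hu.1, h⟩
        refine le_trans h1 ?_
        have : (Finset.Ico 1 m) ⊆ Finset.Ico 1 (m + 1) :=
          Finset.Ico_subset_Ico le_rfl (Nat.le_succ m)
        have hs : ∑ j ∈ Finset.Ico 1 m, Real.exp (-lam * s j)
            ≤ ∑ j ∈ Finset.Ico 1 (m + 1), Real.exp (-lam * s j) :=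
          Finset.sum_le_sum_of_subset_of_nonneg this
            (fun _ _ _ => (Real.exp_pos _).le)
        nlinarith
      · have h2 : ‖x (s m) - x u‖ ≤ β * Real.exp (-lam * u) :=
          hthr m hmρ u ⟨le_of_lt h, hu.2⟩
        have tri : ‖x (s 0) - x u‖ ≤ ‖x (s 0) - x (s m)‖ + ‖x (s m) - x u‖ := by
          have := dist_triangle (x (s 0)) (x (s m)) (x u)
          simpa [dist_eq_norm] using this
        rcases Nat.eq_zero_or_pos m with hm0 | hm1
        · subst hm0
          simp only [Finset.Ico_self, Finset.sum_empty, mul_zero, zero_add]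
          simpa using h2
        · have hsum : ∑ j ∈ Finset.Ico 1 (m + 1), Real.exp (-lam * s j)
              = ∑ j ∈ Finset.Ico 1 m, Real.exp (-lam * s j) + Real.exp (-lam * s m) :=
            Finset.sum_Ico_succ_top hm1 _
          have h1 := ih hmρ' (s m) ⟨smono 0 m (Nat.zero_le m) hmρ', le_rfl⟩
          calc ‖x (s 0) - x u‖ ≤ ‖x (s 0) - x (s m)‖ + ‖x (s m) - x u‖ := tri
            _ ≤ (β * ∑ j ∈ Finset.Ico 1 m, Real.exp (-lam * s j)
                  + β * Real.exp (-lam * s m)) + β * Real.exp (-lam * u) :=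
                add_le_add h1 h2
            _ = β * ∑ j ∈ Finset.Ico 1 (m + 1), Real.exp (-lam * s j)
                  + β * Real.exp (-lam * u) := by rw [hsum]; ring
  intro t ht
  have htub : t ≤ s 0 + (ρ : ℝ) * δbar := by
    have := ht.2
    linarith
  have main := key ρ le_rfl t ht
  refine le_trans main ?_
  have hIcc : Finset.Icc 1 ρ = Finset.Ico 1 (ρ + 1) := by rw [Finset.Ico_add_one_right_eq_Icc]
  rw [hIcc, Finset.sum_Ico_succ_top hρ]
  set E := Real.exp ((ρ : ℝ) * lam * δbar) with hE
  set T := Real.exp (-lam * t) with hT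
  have p1 : ∀ j ∈ Finset.Ico 1 ρ, Real.exp (-lam * s j)
      ≤ E * Real.exp (-(j : ℝ) * lam * τ) * T := by
    intro j hj
    have hj1 : 1 ≤ j := (Finset.mem_Ico.mp hj).1
    have hjρ : j ≤ ρ := le_of_lt (Finset.mem_Ico.mp hj).2
    have hlj := hlow j hj1 hjρ
    rw [hE, hT, ← Real.exp_add, ← Real.exp_add, Real.exp_le_exp]
    nlinarith [mul_nonneg hlam.le
      (by linarith : (0:ℝ) ≤ s j + (ρ : ℝ) * δbar - (j : ℝ) * τ - t)]
  have hP1 : β * ∑ j ∈ Finset.Ico 1 ρ, Real.exp (-lam * s j)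
      ≤ β * E * (∑ j ∈ Finset.Ico 1 ρ, Real.exp (-(j : ℝ) * lam * τ)) * T := by
    calc β * ∑ j ∈ Finset.Ico 1 ρ, Real.exp (-lam * s j)
        ≤ β * ∑ j ∈ Finset.Ico 1 ρ, (E * Real.exp (-(j : ℝ) * lam * τ) * T) := by
          gcongr with j hj
          exact p1 j hj
      _ = β * E * (∑ j ∈ Finset.Ico 1 ρ, Real.exp (-(j : ℝ) * lam * τ)) * T := by
          rw [← Finset.sum_mul, ← Finset.mul_sum]; ring
  have hP2 : β * T ≤ β * E * Real.exp (-(ρ : ℝ) * lam * τ) * T := by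
    have h1 : (1 : ℝ) ≤ E * Real.exp (-(ρ : ℝ) * lam * τ) := by
      rw [hE, ← Real.exp_add]
      apply Real.one_le_exp
      nlinarith [mul_nonneg (mul_nonneg (Nat.cast_nonneg ρ : (0:ℝ) ≤ ρ) hlam.le)
        (by linarith : (0:ℝ) ≤ δbar - τ)]
    have hT0 : 0 ≤ β * T := by rw [hT]; positivity
    nlinarith [mul_le_mul_of_nonneg_right h1 hT0]
  have expand : (β * E * ((∑ j ∈ Finset.Ico 1 ρ, Real.exp (-(j : ℝ) * lam * τ))
        + Real.exp (-(ρ : ℝ) * lam * τ))) * T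
      = β * E * (∑ j ∈ Finset.Ico 1 ρ, Real.exp (-(j : ℝ) * lam * τ)) * T
        + β * E * Real.exp (-(ρ : ℝ) * lam * τ) * T := by ring
  rw [expand]
  exact add_le_add hP1 hP2
end

section
/- Let 0 < λ < λ̂, H₁ > 0, H₂ > 0, β > 0, and t_k ≥ 0, and define τ = (1/λ̂)·ln(1 + β/(H₂/λ + (H₁/λ̂)·e^{(λ−λ̂)·t_k})). Then τ > 0 and (H₁/λ̂)·(1 − e^{−λ̂·τ})·e^{−λ̂·t_k} + (H₂/λ)·(1 − e^{−λ·τ})·e^{−λ·t_k} ≤ β·e^{−λ·(t_k+τ)}. -/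
/-- The inter-event time lower bound
`τ = (1/λ̂)·ln(1 + β/(H₂/λ + (H₁/λ̂)e^{(λ-λ̂)t_k}))` is positive and satisfies
`(H₁/λ̂)(1 - e^{-λ̂τ})e^{-λ̂t_k} + (H₂/λ)(1 - e^{-λτ})e^{-λt_k} ≤ β e^{-λ(t_k+τ)}`. -/
theorem inter_event_time_bound
    (lam lhat H₁ H₂ β tk : ℝ)
    (hlam : 0 < lam) (hlamlt : lam < lhat)
    (hH₁ : 0 < H₁) (hH₂ : 0 < H₂) (hβ : 0 < β) (htk : 0 ≤ tk)
    (τ : ℝ)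
    (hτ : τ = (1 / lhat)
      * Real.log (1 + β / (H₂ / lam + (H₁ / lhat) * Real.exp ((lam - lhat) * tk)))) :
    0 < τ ∧
      (H₁ / lhat) * (1 - Real.exp (-lhat * τ)) * Real.exp (-lhat * tk)
        + (H₂ / lam) * (1 - Real.exp (-lam * τ)) * Real.exp (-lam * tk)
        ≤ β * Real.exp (-lam * (tk + τ)) := by
  have hlhat : 0 < lhat := hlam.trans hlamlt
  set A : ℝ := H₂ / lam + H₁ / lhat * Real.exp ((lam - lhat) * tk) with hAdef
  have hApos : 0 < A := by positivity
  have hone : (1 : ℝ) < 1 + β / A := by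
    have : 0 < β / A := div_pos hβ hApos
    linarith
  have hτpos : 0 < τ := by
    rw [hτ]
    exact mul_pos (by positivity) (Real.log_pos hone)
  refine ⟨hτpos, ?_⟩
  have hexp : Real.exp (lhat * τ) = 1 + β / A := by
    rw [hτ, show lhat * (1 / lhat * Real.log (1 + β / A)) = Real.log (1 + β / A) by
      field_simp]
    exact Real.exp_log (by linarith)
  have hEinv : Real.exp (-lhat * τ) = (1 + β / A)⁻¹ := by
    rw [neg_mul, Real.exp_neg, hexp]
  have hE : Real.exp (-lhat * τ) * (A + β) = A := by
    rw [hEinv]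
    field_simp
  set E := Real.exp (-lhat * τ) with hEdef
  set F := Real.exp (-lam * τ) with hFdef
  have hEpos : 0 < E := Real.exp_pos _
  have hFpos : 0 < F := Real.exp_pos _
  have hEF : E ≤ F := Real.exp_le_exp.mpr (by nlinarith)
  have hF1 : F ≤ 1 := by
    rw [hFdef]
    have : Real.exp (-lam * τ) ≤ Real.exp 0 := Real.exp_le_exp.mpr (by nlinarith)
    simpa using this
  set G := Real.exp ((lam - lhat) * tk) with hGdef
  set P := Real.exp (-lam * tk) with hPdef
  have hGpos : 0 < G := Real.exp_pos _
  have hPpos : 0 < P := Real.exp_pos _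
  have hsplit1 : Real.exp (-lhat * tk) = G * P := by
    rw [hGdef, hPdef, ← Real.exp_add]; ring_nf
  have hsplit2 : Real.exp (-lam * (tk + τ)) = P * F := by
    rw [hFdef, hPdef, ← Real.exp_add]; ring_nf
  rw [hsplit1, hsplit2]
  have key : H₁ / lhat * (1 - E) * G + H₂ / lam * (1 - F) ≤ β * F := by
    have h1 : H₂ / lam * (1 - F) ≤ H₂ / lam * (1 - E) :=
      mul_le_mul_of_nonneg_left (by linarith) (by positivity)
    calc H₁ / lhat * (1 - E) * G + H₂ / lam * (1 - F)
        ≤ H₁ / lhat * (1 - E) * G + H₂ / lam * (1 - E) := by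
          exact add_le_add_right h1 _
      _ = (1 - E) * A := by rw [hAdef]; ring
      _ = β * E := by nlinarith [hE]
      _ ≤ β * F := by nlinarith
  calc H₁ / lhat * (1 - E) * (G * P) + H₂ / lam * (1 - F) * P
      = (H₁ / lhat * (1 - E) * G + H₂ / lam * (1 - F)) * P := by ring
    _ ≤ (β * F) * P := mul_le_mul_of_nonneg_right key hPpos.le
    _ = β * (P * F) := by ring
end

section
/- Let 0 < λ < λ̂, H₁ > 0, H₂ > 0, β > 0, and t_k ≥ 0, and define τ = (1/λ̂)·ln(1 + β/(H₂/λ + (H₁/λ̂)·e^{(λ−λ̂)·t_k})). Let e : ℝ → ℝⁿ be differentiable on [t_k, t_k+τ] with e(t_k) = 0 and ‖e′(s)‖ ≤ H₁·e^{−λ̂·s} + H₂·e^{−λ·s} for all s ∈ [t_k, t_k+τ]. Then ‖e(t)‖ ≤ β·e^{−λ·t} for every t ∈ [t_k, t_k+τ]; that is, the local state error stays below the event-triggering threshold for at least time τ after each event. -/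
/-- After an event at time `t_k`, the local state error (reset to zero at `t_k`, with
derivative bounded by `H₁ e^{-λ̂ s} + H₂ e^{-λ s}`) stays below the event-triggering
threshold `β e^{-λ t}` for at least
`τ = (1/λ̂)·ln(1 + β/(H₂/λ + (H₁/λ̂)e^{(λ-λ̂)t_k}))` time units. -/
theorem error_below_threshold_until_tau
    (n : ℕ) (lam lhat H₁ H₂ β tk : ℝ)
    (hlam : 0 < lam) (hlamlt : lam < lhat)
    (hH₁ : 0 < H₁) (hH₂ : 0 < H₂) (hβ : 0 < β) (htk : 0 ≤ tk)
    (τ : ℝ)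
    (hτ : τ = (1 / lhat)
      * Real.log (1 + β / (H₂ / lam + (H₁ / lhat) * Real.exp ((lam - lhat) * tk))))
    (e e' : ℝ → EuclideanSpace ℝ (Fin n))
    (hzero : e tk = 0)
    (hderiv : ∀ s ∈ Set.Icc tk (tk + τ),
      HasDerivWithinAt e (e' s) (Set.Icc tk (tk + τ)) s)
    (hbound : ∀ s ∈ Set.Icc tk (tk + τ),
      ‖e' s‖ ≤ H₁ * Real.exp (-lhat * s) + H₂ * Real.exp (-lam * s)) :
    ∀ t ∈ Set.Icc tk (tk + τ), ‖e t‖ ≤ β * Real.exp (-lam * t) := by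
  have hlhat : 0 < lhat := hlam.trans hlamlt
  set A : ℝ := H₂ / lam + (H₁ / lhat) * Real.exp ((lam - lhat) * tk) with hA_def
  have hA : 0 < A := by positivity
  have hApos : 0 < 1 + β / A := by positivity
  have hexpτ : Real.exp (lhat * τ) = 1 + β / A := by
    rw [hτ]; rw [show lhat * (1 / lhat * Real.log (1 + β / A)) = Real.log (1 + β / A) by
      field_simp]
    exact Real.exp_log hApos
  -- barrier function
  set B : ℝ → ℝ := fun t => H₁ / lhat * (Real.exp (-lhat * tk) - Real.exp (-lhat * t))
      + H₂ / lam * (Real.exp (-lam * tk) - Real.exp (-lam * t)) with hB_def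
  have hB' : ∀ x : ℝ, HasDerivAt B (H₁ * Real.exp (-lhat * x) + H₂ * Real.exp (-lam * x)) x := by
    intro x
    have h1 : HasDerivAt (fun t : ℝ => Real.exp (-lhat * t))
        (Real.exp (-lhat * x) * (-lhat)) x := by
      simpa using ((hasDerivAt_id x).const_mul (-lhat)).exp
    have h2 : HasDerivAt (fun t : ℝ => Real.exp (-lam * t))
        (Real.exp (-lam * x) * (-lam)) x := by
      simpa using ((hasDerivAt_id x).const_mul (-lam)).exp
    have := (((hasDerivAt_const x (Real.exp (-lhat * tk))).sub h1).const_mul (H₁ / lhat)).add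
      (((hasDerivAt_const x (Real.exp (-lam * tk))).sub h2).const_mul (H₂ / lam))
    refine this.congr_deriv ?_
    field_simp
    ring
  have hEb : ∀ t ∈ Set.Icc tk (tk + τ), ‖e t‖ ≤ B t := by
    intro t ht
    refine image_norm_le_of_norm_deriv_right_le_deriv_boundary
      (f := e) (f' := e') (a := tk) (b := tk + τ)
      (fun x hx => (hderiv x hx).continuousWithinAt)
      (fun x hx => (hderiv x (Set.Ico_subset_Icc_self hx)).mono_of_mem_nhdsWithin
        (Icc_mem_nhdsGE_of_mem hx))
      ?_ hB' (fun x hx => hbound x (Set.Ico_subset_Icc_self hx)) ht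
    simp [hzero, hB_def]
  intro t ht
  refine (hEb t ht).trans ?_
  obtain ⟨ht1, ht2⟩ := ht
  set u : ℝ := t - tk with hu_def
  have hu0 : 0 ≤ u := by linarith
  have huτ : u ≤ τ := by linarith
  -- key scalar inequality: A * (1 - exp(-lhat*u)) ≤ β * exp(-lhat*u)
  have hmono : Real.exp (lhat * u) ≤ 1 + β / A := by
    rw [← hexpτ]
    exact Real.exp_le_exp.2 (mul_le_mul_of_nonneg_left huτ hlhat.le)
  have hmul : Real.exp (lhat * u) * Real.exp (-(lhat * u)) = 1 := by
    rw [← Real.exp_add]; simp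
  have hkey : A * (1 - Real.exp (-(lhat * u))) ≤ β * Real.exp (-(lhat * u)) := by
    have h1 : A * Real.exp (lhat * u) ≤ A + β := by
      have := mul_le_mul_of_nonneg_left hmono hA.le
      calc A * Real.exp (lhat * u) ≤ A * (1 + β / A) := this
        _ = A + β := by field_simp
    nlinarith [Real.exp_pos (-(lhat * u)), mul_le_mul_of_nonneg_right h1
      (Real.exp_pos (-(lhat * u))).le]
  -- exponent splittings
  have hsplit1 : Real.exp (-lhat * t) = Real.exp (-lhat * tk) * Real.exp (-(lhat * u)) := by
    rw [← Real.exp_add, hu_def]; ring_nf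
  have hsplit2 : Real.exp (-lam * t) = Real.exp (-lam * tk) * Real.exp (-(lam * u)) := by
    rw [← Real.exp_add, hu_def]; ring_nf
  have hAE : Real.exp (-lam * tk) * A
      = H₂ / lam * Real.exp (-lam * tk) + H₁ / lhat * Real.exp (-lhat * tk) := by
    rw [hA_def]
    have : Real.exp (-lam * tk) * Real.exp ((lam - lhat) * tk) = Real.exp (-lhat * tk) := by
      rw [← Real.exp_add]; ring_nf
    linear_combination (H₁ / lhat) * this
  have hEu : Real.exp (-(lhat * u)) ≤ Real.exp (-(lam * u)) := by
    apply Real.exp_le_exp.2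
    have : lam * u ≤ lhat * u := mul_le_mul_of_nonneg_right hlamlt.le hu0
    linarith
  have hE2 : (0:ℝ) ≤ Real.exp (-lam * tk) := (Real.exp_pos _).le
  have p1 : (H₂ / lam * Real.exp (-lam * tk) + H₁ / lhat * Real.exp (-lhat * tk))
      * (1 - Real.exp (-(lhat * u)))
      ≤ β * Real.exp (-lam * tk) * Real.exp (-(lhat * u)) := by
    calc (H₂ / lam * Real.exp (-lam * tk) + H₁ / lhat * Real.exp (-lhat * tk))
          * (1 - Real.exp (-(lhat * u)))
        = Real.exp (-lam * tk) * (A * (1 - Real.exp (-(lhat * u)))) := by rw [← hAE]; ring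
      _ ≤ Real.exp (-lam * tk) * (β * Real.exp (-(lhat * u))) :=
          mul_le_mul_of_nonneg_left hkey hE2
      _ = β * Real.exp (-lam * tk) * Real.exp (-(lhat * u)) := by ring
  have p3 := mul_le_mul_of_nonneg_left hEu
    (mul_nonneg (div_pos hH₂ hlam).le hE2)
  have p4 := mul_le_mul_of_nonneg_left hEu (mul_nonneg hβ.le hE2)
  simp only [hB_def]
  rw [hsplit1, hsplit2]
  nlinarith [p1, p3, p4]
end

section
/- Let 0 < λ < λ̂, H₁ > 0, H₂ > 0, γ_d > 0, and t′ ≥ 0, and define d = (1/λ̂)·ln(1 + γ_d/(H₂/λ + (H₁/λ̂)·e^{(λ−λ̂)·t′})). Let e : ℝ → ℝⁿ be differentiable on [t′, t′+d] with e(t′) = 0 and ‖e′(s)‖ ≤ H₁·e^{−λ̂·s} + H₂·e^{−λ·s} for all s ∈ [t′, t′+d]. Then d > 0 and ‖e(t)‖ ≤ γ_d·e^{−λ·t} for every t ∈ [t′, t′+d]; that is, any communication delay not exceeding d keeps the delay-induced state error below γ_d·e^{−λ·t}. -/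
private lemma key_real_ineq (lam lhat H₁ H₂ γd t' d t : ℝ)
    (hlam : 0 < lam) (hlamlt : lam < lhat)
    (hH₁ : 0 < H₁) (hH₂ : 0 < H₂) (hγd : 0 < γd)
    (hexp : Real.exp (lhat * d)
      = 1 + γd / (H₂ / lam + H₁ / lhat * Real.exp ((lam - lhat) * t')))
    (ht1 : t' ≤ t) (ht2 : t ≤ t' + d) :
    H₁ / lhat * (Real.exp (-lhat * t') - Real.exp (-lhat * t))
      + H₂ / lam * (Real.exp (-lam * t') - Real.exp (-lam * t))
      ≤ γd * Real.exp (-lam * t) := by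
  have hlhat : 0 < lhat := hlam.trans hlamlt
  set K : ℝ := H₂ / lam + H₁ / lhat * Real.exp ((lam - lhat) * t') with hK
  have hKpos : 0 < K := by positivity
  have hu0 : 0 ≤ t - t' := by linarith
  have hud : t - t' ≤ d := by linarith
  set u : ℝ := t - t' with hu
  have a1 : -lhat * t' = -lam * t + ((lam - lhat) * t' + lam * u) := by rw [hu]; ring
  have a2 : -lhat * t = -lam * t + ((lam - lhat) * t' + (lam - lhat) * u) := by rw [hu]; ring
  have a3 : -lam * t' = -lam * t + lam * u := by rw [hu]; ring
  have e1 : Real.exp (-lhat * t') - Real.exp (-lhat * t)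
      = Real.exp (-lam * t) * (Real.exp ((lam - lhat) * t')
        * (Real.exp (lam * u) - Real.exp ((lam - lhat) * u))) := by
    rw [a1, a2, Real.exp_add, Real.exp_add, Real.exp_add, Real.exp_add]; ring
  have e2 : Real.exp (-lam * t') - Real.exp (-lam * t)
      = Real.exp (-lam * t) * (Real.exp (lam * u) - 1) := by
    rw [a3, Real.exp_add]; ring
  have hP : Real.exp (lam * u) ≤ Real.exp (lhat * u) :=
    Real.exp_le_exp.2 (by nlinarith)
  have hQ : Real.exp (lhat * u) ≤ Real.exp (lhat * d) :=
    Real.exp_le_exp.2 (by nlinarith)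
  have hR : Real.exp (-lhat * u) ≤ 1 := Real.exp_le_one_iff.2 (by nlinarith)
  have hQR : Real.exp (lhat * u) * Real.exp (-lhat * u) = 1 := by
    rw [← Real.exp_add]; ring_nf; exact Real.exp_zero
  have hPR : Real.exp ((lam - lhat) * u) = Real.exp (lam * u) * Real.exp (-lhat * u) := by
    rw [← Real.exp_add]; ring_nf
  have key1 : Real.exp (lam * u) - Real.exp ((lam - lhat) * u) ≤ Real.exp (lhat * d) - 1 := by
    rw [hPR]
    nlinarith [Real.exp_pos (lam * u), Real.exp_pos (-lhat * u)]
  have key2 : Real.exp (lam * u) - 1 ≤ Real.exp (lhat * d) - 1 := by linarith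
  have hEd : Real.exp (lhat * d) - 1 = γd / K := by rw [hexp]; ring
  have hemt : (0:ℝ) < Real.exp (-lam * t) := Real.exp_pos _
  have c1 : H₁ / lhat * (Real.exp ((lam - lhat) * t')
      * (Real.exp (lam * u) - Real.exp ((lam - lhat) * u)))
      ≤ H₁ / lhat * Real.exp ((lam - lhat) * t') * (Real.exp (lhat * d) - 1) := by
    have h := mul_le_mul_of_nonneg_left key1
      (by positivity : (0:ℝ) ≤ H₁ / lhat * Real.exp ((lam - lhat) * t'))
    linarith [h]
  have c2 : H₂ / lam * (Real.exp (lam * u) - 1) ≤ H₂ / lam * (Real.exp (lhat * d) - 1) :=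
    mul_le_mul_of_nonneg_left key2 (by positivity)
  have hfinal : H₁ / lhat * (Real.exp ((lam - lhat) * t')
      * (Real.exp (lam * u) - Real.exp ((lam - lhat) * u)))
      + H₂ / lam * (Real.exp (lam * u) - 1) ≤ K * (Real.exp (lhat * d) - 1) := by
    rw [hK]; ring_nf; ring_nf at c1 c2 ⊢; linarith
  have hKg : K * (Real.exp (lhat * d) - 1) = γd := by
    rw [hEd]; field_simp
  calc H₁ / lhat * (Real.exp (-lhat * t') - Real.exp (-lhat * t))
        + H₂ / lam * (Real.exp (-lam * t') - Real.exp (-lam * t))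
      = Real.exp (-lam * t) * (H₁ / lhat * (Real.exp ((lam - lhat) * t')
          * (Real.exp (lam * u) - Real.exp ((lam - lhat) * u)))
          + H₂ / lam * (Real.exp (lam * u) - 1)) := by rw [e1, e2]; ring
    _ ≤ Real.exp (-lam * t) * (K * (Real.exp (lhat * d) - 1)) :=
        mul_le_mul_of_nonneg_left hfinal hemt.le
    _ = γd * Real.exp (-lam * t) := by rw [hKg]; ring

/-- Any communication delay not exceeding
`d = (1/λ̂)·ln(1 + γ_d/(H₂/λ + (H₁/λ̂)e^{(λ-λ̂)t′}))` keeps the delay-induced state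
error (zero at the broadcast instant `t′` and with derivative bounded by
`H₁ e^{-λ̂ s} + H₂ e^{-λ s}`) below `γ_d e^{-λ t}`; moreover `d > 0`. -/
theorem admissible_delay_bound
    (n : ℕ) (lam lhat H₁ H₂ γd t' : ℝ)
    (hlam : 0 < lam) (hlamlt : lam < lhat)
    (hH₁ : 0 < H₁) (hH₂ : 0 < H₂) (hγd : 0 < γd) (ht' : 0 ≤ t')
    (d : ℝ)
    (hd : d = (1 / lhat)
      * Real.log (1 + γd / (H₂ / lam + (H₁ / lhat) * Real.exp ((lam - lhat) * t'))))
    (e e' : ℝ → EuclideanSpace ℝ (Fin n))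
    (hzero : e t' = 0)
    (hderiv : ∀ s ∈ Set.Icc t' (t' + d),
      HasDerivWithinAt e (e' s) (Set.Icc t' (t' + d)) s)
    (hbound : ∀ s ∈ Set.Icc t' (t' + d),
      ‖e' s‖ ≤ H₁ * Real.exp (-lhat * s) + H₂ * Real.exp (-lam * s)) :
    0 < d ∧ ∀ t ∈ Set.Icc t' (t' + d), ‖e t‖ ≤ γd * Real.exp (-lam * t) := by
  have hlhat : 0 < lhat := hlam.trans hlamlt
  have hKpos : 0 < H₂ / lam + H₁ / lhat * Real.exp ((lam - lhat) * t') := by positivity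
  have hratio : 0 < γd / (H₂ / lam + H₁ / lhat * Real.exp ((lam - lhat) * t')) := by positivity
  have hdpos : 0 < d := by
    rw [hd]
    have : 0 < Real.log (1 + γd / (H₂ / lam + H₁ / lhat * Real.exp ((lam - lhat) * t'))) :=
      Real.log_pos (by linarith)
    positivity
  have hexp : Real.exp (lhat * d)
      = 1 + γd / (H₂ / lam + H₁ / lhat * Real.exp ((lam - lhat) * t')) := by
    rw [hd]
    have h1 : lhat * (1 / lhat * Real.log
        (1 + γd / (H₂ / lam + H₁ / lhat * Real.exp ((lam - lhat) * t'))))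
        = Real.log (1 + γd / (H₂ / lam + H₁ / lhat * Real.exp ((lam - lhat) * t'))) := by
      field_simp
    rw [h1, Real.exp_log (by linarith)]
  refine ⟨hdpos, ?_⟩
  set B : ℝ → ℝ := fun t => H₁ / lhat * (Real.exp (-lhat * t') - Real.exp (-lhat * t))
      + H₂ / lam * (Real.exp (-lam * t') - Real.exp (-lam * t)) with hBdef
  set B' : ℝ → ℝ := fun t => H₁ * Real.exp (-lhat * t) + H₂ * Real.exp (-lam * t) with hB'def
  have hBderiv : ∀ x, HasDerivAt B (B' x) x := by
    intro x
    have h1 : HasDerivAt (fun t => Real.exp (-lhat * t))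
        (Real.exp (-lhat * x) * -lhat) x :=
      ((hasDerivAt_id x).const_mul (-lhat)).exp.congr_deriv (by simp)
    have h2 : HasDerivAt (fun t => Real.exp (-lam * t))
        (Real.exp (-lam * x) * -lam) x :=
      ((hasDerivAt_id x).const_mul (-lam)).exp.congr_deriv (by simp)
    have := (((hasDerivAt_const x (Real.exp (-lhat * t'))).sub h1).const_mul (H₁ / lhat)).add
      (((hasDerivAt_const x (Real.exp (-lam * t'))).sub h2).const_mul (H₂ / lam))
    convert this using 1
    · exact rfl
    · exact rfl
    · exact rfl
    rw [hB'def]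
    field_simp
    ring
  have hcont : ContinuousOn e (Set.Icc t' (t' + d)) :=
    fun x hx => (hderiv x hx).continuousWithinAt
  have hf' : ∀ x ∈ Set.Ico t' (t' + d), HasDerivWithinAt e (e' x) (Set.Ici x) x :=
    fun x hx => (hderiv x (Set.Ico_subset_Icc_self hx)).mono_of_mem_nhdsWithin
      (Icc_mem_nhdsGE_of_mem hx)
  have ha : ‖e t'‖ ≤ B t' := by simp [hzero, hBdef]
  have hmain : ∀ x ∈ Set.Icc t' (t' + d), ‖e x‖ ≤ B x := fun x hx =>
    image_norm_le_of_norm_deriv_right_le_deriv_boundary hcont hf' ha hBderiv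
      (fun s hs => hbound s (Set.Ico_subset_Icc_self hs)) hx
  intro t ht
  exact (hmain t ht).trans
    (key_real_ineq lam lhat H₁ H₂ γd t' d t hlam hlamlt hH₁ hH₂ hγd hexp ht.1 ht.2)
end
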